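/- Sufficient optimality condition for the k-th order differential inclusion (Theorem 3.1). Assume the graph {(x,v) : v ∈ F(x,t)} is convex for each t ∈ [0,T], f : ℝⁿ × ℝⁿ → ℝ is convex, S is convex, and X(t) is convex for every t ∈ [0,T]. Let (x̃, ṽ) be a feasible solution of order k, let (x*, w) be an adjoint arc of order k, and let v* : [0,T] → ℝⁿ satisfy: (a)–(b) for a.e. t ∈ [0,T], ⟨y − x̃(t), v*(t)⟩ ≥ 0 for all y ∈ X(t), and ⟨v − ṽ(t), x*(t)⟩ ≤ ⟨(−1)^k w(t) − v*(t), x − x̃(t)⟩ for every x ∈ ℝⁿ and every v ∈ F(x,t); (c) there exist p ∈ ∂f(x̃(0), x̃(T)) and μ* ∈ K_S*(x̃(0), x̃(T)) with ((−1)^{k−1} x*^{(k−1)}(0), (−1)^k x*^{(k−1)}(T)) = p − μ*; (d) for every j = 0,…,k−2, ((−1)^{j+1} x*^{(j)}(0), (−1)^j x*^{(j)}(T)) ∈ K_S*(x̃^{(k−j−1)}(0), x̃^{(k−j−1)}(T)). Then f(x(0), x(T)) ≥ f(x̃(0), x̃(T)) for every feasible solution (x, v) of order k. -/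

import Mathlib

open MeasureTheory Matrix Set

/-- A feasible solution of order `k` for the problem (PHC): `x` is `(k-1)`-times
differentiable, `v` (playing the role of `x⁽ᵏ⁾`) is integrable,
`x⁽ᵏ⁻¹⁾(t) = x⁽ᵏ⁻¹⁾(0) + ∫₀ᵗ v`, `v(t) ∈ F(x(t),t)` a.e., the endpoint pairs lie in `S`
and the state constraint `x(t) ∈ X(t)` holds. -/
def IsFeasible (n k : ℕ) (T : ℝ)
    (F : (Fin n → ℝ) → ℝ → Set (Fin n → ℝ))
    (S : Set ((Fin n → ℝ) × (Fin n → ℝ)))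
    (X : ℝ → Set (Fin n → ℝ))
    (x v : ℝ → (Fin n → ℝ)) : Prop :=
  (∀ j < k - 1, Differentiable ℝ (iteratedDeriv j x)) ∧
  IntervalIntegrable v volume 0 T ∧
  (∀ t ∈ Icc (0:ℝ) T,
      iteratedDeriv (k-1) x t = iteratedDeriv (k-1) x 0 + ∫ s in (0:ℝ)..t, v s) ∧
  (∀ᵐ t ∂volume, t ∈ Icc (0:ℝ) T → v t ∈ F (x t) t) ∧
  (∀ j < k, (iteratedDeriv j x 0, iteratedDeriv j x T) ∈ S) ∧
  (∀ t ∈ Icc (0:ℝ) T, x t ∈ X t)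

/-- An adjoint arc of order `k`: `x*` is `(k-1)`-times differentiable and
`x*⁽ᵏ⁻¹⁾(t) = x*⁽ᵏ⁻¹⁾(0) + ∫₀ᵗ w` with `w` integrable. -/
def IsAdjointArc (n k : ℕ) (T : ℝ) (xs w : ℝ → (Fin n → ℝ)) : Prop :=
  (∀ j < k - 1, Differentiable ℝ (iteratedDeriv j xs)) ∧
  IntervalIntegrable w volume 0 T ∧
  (∀ t ∈ Icc (0:ℝ) T,
      iteratedDeriv (k-1) xs t = iteratedDeriv (k-1) xs 0 + ∫ s in (0:ℝ)..t, w s)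


open intervalIntegral


lemma IImono {f : ℝ → ℝ} {T : ℝ} (hT : 0 ≤ T) (hf : IntervalIntegrable f volume 0 T)
    {t : ℝ} (ht : t ∈ Icc (0:ℝ) T) : IntervalIntegrable f volume 0 t :=
  hf.mono_set (uIcc_subset_uIcc left_mem_uIcc (by rw [uIcc_of_le hT]; exact ht))

lemma parts_core {T : ℝ} (hT : 0 ≤ T) {u m : ℝ → ℝ}
    (hu : IntervalIntegrable u volume 0 T) (hm : IntervalIntegrable m volume 0 T) :
    ∫ t in (0:ℝ)..T, (∫ s in (0:ℝ)..t, m s) * u t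
      = ∫ s in (0:ℝ)..T, m s * ((∫ r in (0:ℝ)..T, u r) - ∫ r in (0:ℝ)..s, u r) := by
  set μ := volume.restrict (Ioc (0:ℝ) T) with hμ
  set F : ℝ → ℝ → ℝ := fun s t => {p : ℝ × ℝ | p.1 ≤ p.2}.indicator (fun p => m p.1 * u p.2) (s, t)
    with hF
  have hFint : Integrable (Function.uncurry F) (μ.prod μ) := by
    have base : Integrable (fun p : ℝ × ℝ => m p.1 * u p.2) (μ.prod μ) :=
      Integrable.mul_prod hm.1 hu.1
    have : Function.uncurry F = ({p : ℝ × ℝ | p.1 ≤ p.2}).indicator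
        (fun p => m p.1 * u p.2) := by
      funext p; cases p; rfl
    rw [this]
    exact base.indicator (measurableSet_le measurable_fst measurable_snd)
  have swap := integral_integral_swap hFint
  -- right side of swap : ∫ t, ∫ s, F s t ∂μ ∂μ = ∫ t in Ioc 0 T, (∫ s in 0..t, m s) * u t
  have hright : ∫ t, ∫ s, F s t ∂μ ∂μ = ∫ t in Ioc (0:ℝ) T, (∫ s in (0:ℝ)..t, m s) * u t := by
    rw [hμ]
    refine setIntegral_congr_fun measurableSet_Ioc (fun t ht => ?_)
    have h1 : ∀ s, F s t = (Iic t).indicator (fun s => m s * u t) s := by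
      intro s
      by_cases h : s ≤ t <;> simp [hF, Set.indicator, h]
    simp only [h1]
    rw [setIntegral_indicator measurableSet_Iic]
    have h2 : Ioc (0:ℝ) T ∩ Iic t = Ioc 0 t := by
      ext s; simp only [mem_inter_iff, mem_Ioc, mem_Iic]
      exact ⟨fun h => ⟨h.1.1, h.2⟩, fun h => ⟨⟨h.1, h.2.trans ht.2⟩, h.2⟩⟩
    rw [h2, MeasureTheory.integral_mul_const, integral_of_le ht.1.le]
  -- left side of swap
  have hleft : ∫ s, ∫ t, F s t ∂μ ∂μ
      = ∫ s in Ioc (0:ℝ) T, m s * ((∫ r in (0:ℝ)..T, u r) - ∫ r in (0:ℝ)..s, u r) := by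
    rw [hμ]
    refine setIntegral_congr_fun measurableSet_Ioc (fun s hs => ?_)
    have h1 : ∀ t, F s t = (Ici s).indicator (fun t => m s * u t) t := by
      intro t
      by_cases h : s ≤ t <;> simp [hF, Set.indicator, h]
    simp only [h1]
    rw [setIntegral_indicator measurableSet_Ici]
    have h2 : Ioc (0:ℝ) T ∩ Ici s = Icc s T := by
      ext t; simp only [mem_inter_iff, mem_Ioc, mem_Icc, mem_Ici]
      exact ⟨fun h => ⟨h.2, h.1.2⟩, fun h => ⟨⟨lt_of_lt_of_le hs.1 h.1, h.2⟩, h.1⟩⟩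
    rw [h2, integral_Icc_eq_integral_Ioc, ← integral_of_le hs.2, intervalIntegral.integral_const_mul,
      ← integral_interval_sub_left hu (IImono hT hu ⟨hs.1.le, hs.2⟩)]
  rw [integral_of_le hT, integral_of_le hT, ← hright, ← hleft, swap]

lemma IImono' {f : ℝ → ℝ} {T : ℝ} (hT : 0 ≤ T) (hf : IntervalIntegrable f volume 0 T)
    {t : ℝ} (ht : t ∈ Icc (0:ℝ) T) : IntervalIntegrable f volume 0 t :=
  hf.mono_set (uIcc_subset_uIcc left_mem_uIcc (by rw [uIcc_of_le hT]; exact ht))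

lemma primCont {m : ℝ → ℝ} {T : ℝ} (hm : IntervalIntegrable m volume 0 T) :
    ContinuousOn (fun t => ∫ s in (0:ℝ)..t, m s) (uIcc 0 T) :=
  continuousOn_primitive_interval' hm left_mem_uIcc

lemma ibp_scalar {T : ℝ} (hT : 0 ≤ T) {u m : ℝ → ℝ} (c d : ℝ)
    (hu : IntervalIntegrable u volume 0 T) (hm : IntervalIntegrable m volume 0 T) :
    ∫ t in (0:ℝ)..T, (u t * (d + ∫ s in (0:ℝ)..t, m s) + (c + ∫ s in (0:ℝ)..t, u s) * m t)
      = (c + ∫ s in (0:ℝ)..T, u s) * (d + ∫ s in (0:ℝ)..T, m s) - c * d := by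
  set P : ℝ → ℝ := fun t => ∫ s in (0:ℝ)..t, u s with hP
  set Q : ℝ → ℝ := fun t => ∫ s in (0:ℝ)..t, m s with hQ
  have hPc : ContinuousOn P (uIcc 0 T) := primCont hu
  have hQc : ContinuousOn Q (uIcc 0 T) := primCont hm
  have i1 : IntervalIntegrable (fun t => u t * (d + Q t)) volume 0 T :=
    hu.mul_continuousOn (continuousOn_const.add hQc)
  have i2 : IntervalIntegrable (fun t => (c + P t) * m t) volume 0 T :=
    hm.continuousOn_mul (continuousOn_const.add hPc)
  have i3 : IntervalIntegrable (fun t => u t * d) volume 0 T := hu.mul_const d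
  have i4 : IntervalIntegrable (fun t => u t * Q t) volume 0 T := hu.mul_continuousOn hQc
  have i5 : IntervalIntegrable (fun t => c * m t) volume 0 T := hm.const_mul c
  have i6 : IntervalIntegrable (fun t => P t * m t) volume 0 T := hm.continuousOn_mul hPc
  rw [integral_add i1 i2]
  have e1 : ∫ t in (0:ℝ)..T, u t * (d + Q t)
      = (∫ t in (0:ℝ)..T, u t * d) + ∫ t in (0:ℝ)..T, u t * Q t := by
    rw [← integral_add i3 i4]; congr 1; funext t; ring
  have e2 : ∫ t in (0:ℝ)..T, (c + P t) * m t
      = (∫ t in (0:ℝ)..T, c * m t) + ∫ t in (0:ℝ)..T, P t * m t := by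
    rw [← integral_add i5 i6]; congr 1; funext t; ring
  have core : ∫ t in (0:ℝ)..T, Q t * u t
      = ∫ s in (0:ℝ)..T, m s * (P T - P s) := parts_core hT hu hm
  have e3 : ∫ t in (0:ℝ)..T, u t * Q t = ∫ t in (0:ℝ)..T, Q t * u t := by
    congr 1; funext t; ring
  have e4 : ∫ s in (0:ℝ)..T, m s * (P T - P s)
      = (∫ s in (0:ℝ)..T, m s * P T) - ∫ s in (0:ℝ)..T, m s * P s := by
    rw [← integral_sub (hm.mul_const (P T)) (hm.mul_continuousOn hPc)]
    congr 1; funext s; ring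
  have e5 : ∫ s in (0:ℝ)..T, m s * P s = ∫ s in (0:ℝ)..T, P s * m s := by
    congr 1; funext s; ring
  rw [e1, e2, e3, core, e4, e5, intervalIntegral.integral_mul_const, intervalIntegral.integral_mul_const, intervalIntegral.integral_const_mul]
  ring

variable {n : ℕ}

lemma IImonoE {E : Type*} [NormedAddCommGroup E] {f : ℝ → E} {T : ℝ} (hT : 0 ≤ T)
    (hf : IntervalIntegrable f volume 0 T) {t : ℝ} (ht : t ∈ Icc (0:ℝ) T) :
    IntervalIntegrable f volume 0 t :=
  hf.mono_set (uIcc_subset_uIcc left_mem_uIcc (by rw [uIcc_of_le hT]; exact ht))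

lemma II.proj' {f : ℝ → Fin n → ℝ} {a b : ℝ} (hf : IntervalIntegrable f volume a b) (i : Fin n) :
    IntervalIntegrable (fun t => f t i) volume a b :=
  ⟨(ContinuousLinearMap.proj (R := ℝ) (φ := fun _ : Fin n => ℝ) i).integrable_comp hf.1,
   (ContinuousLinearMap.proj (R := ℝ) (φ := fun _ : Fin n => ℝ) i).integrable_comp hf.2⟩

lemma II.integral_proj' {f : ℝ → Fin n → ℝ} {a b : ℝ} (hf : IntervalIntegrable f volume a b)
    (i : Fin n) : (∫ t in a..b, f t) i = ∫ t in a..b, f t i := by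
  have h1 := (ContinuousLinearMap.proj (R := ℝ) (φ := fun _ : Fin n => ℝ) i).integral_comp_comm hf.1
  have h2 := (ContinuousLinearMap.proj (R := ℝ) (φ := fun _ : Fin n => ℝ) i).integral_comp_comm hf.2
  simp only [ContinuousLinearMap.proj_apply] at h1 h2
  rw [intervalIntegral, intervalIntegral, Pi.sub_apply, ← h1, ← h2]

lemma ibp_vec {T : ℝ} (hT : 0 ≤ T) {g h u m : ℝ → Fin n → ℝ}
    (hu : IntervalIntegrable u volume 0 T) (hm : IntervalIntegrable m volume 0 T)
    (hg : ∀ t ∈ Icc (0:ℝ) T, g t = g 0 + ∫ s in (0:ℝ)..t, u s)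
    (hh : ∀ t ∈ Icc (0:ℝ) T, h t = h 0 + ∫ s in (0:ℝ)..t, m s) :
    ∫ t in (0:ℝ)..T, (u t ⬝ᵥ h t + g t ⬝ᵥ m t) = g T ⬝ᵥ h T - g 0 ⬝ᵥ h 0 := by
  have hgc : ∀ t ∈ Icc (0:ℝ) T, ∀ i, g t i = g 0 i + ∫ s in (0:ℝ)..t, u s i := by
    intro t ht i
    rw [hg t ht, Pi.add_apply, II.integral_proj' (IImonoE hT hu ht) i]
  have hhc : ∀ t ∈ Icc (0:ℝ) T, ∀ i, h t i = h 0 i + ∫ s in (0:ℝ)..t, m s i := by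
    intro t ht i
    rw [hh t ht, Pi.add_apply, II.integral_proj' (IImonoE hT hm ht) i]
  have hEq : EqOn (fun t => u t ⬝ᵥ h t + g t ⬝ᵥ m t)
      (fun t => ∑ i : Fin n, (u t i * (h 0 i + ∫ s in (0:ℝ)..t, m s i)
        + (g 0 i + ∫ s in (0:ℝ)..t, u s i) * m t i)) (uIcc 0 T) := by
    intro t ht
    rw [uIcc_of_le hT] at ht
    simp only [dotProduct, ← Finset.sum_add_distrib]
    refine Finset.sum_congr rfl (fun i _ => ?_)
    rw [← hhc t ht i, ← hgc t ht i]
  rw [integral_congr hEq, intervalIntegral.integral_finset_sum]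
  · have : ∀ i : Fin n,
        (∫ t in (0:ℝ)..T, (u t i * (h 0 i + ∫ s in (0:ℝ)..t, m s i)
          + (g 0 i + ∫ s in (0:ℝ)..t, u s i) * m t i))
        = (g 0 i + ∫ s in (0:ℝ)..T, u s i) * (h 0 i + ∫ s in (0:ℝ)..T, m s i)
            - g 0 i * h 0 i := by
      intro i
      exact ibp_scalar hT (g 0 i) (h 0 i) (II.proj' hu i) (II.proj' hm i)
    rw [Finset.sum_congr rfl (fun i _ => this i)]
    have hT' : (T : ℝ) ∈ Icc (0:ℝ) T := ⟨hT, le_refl T⟩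
    have : ∀ i : Fin n, g T i * h T i
        = (g 0 i + ∫ s in (0:ℝ)..T, u s i) * (h 0 i + ∫ s in (0:ℝ)..T, m s i) := by
      intro i; rw [hgc T hT' i, hhc T hT' i]
    simp only [dotProduct, Finset.sum_sub_distrib]
    rw [Finset.sum_congr rfl (fun i _ => this i)]
  · intro i _
    refine IntervalIntegrable.add ?_ ?_
    · exact (II.proj' hu i).mul_continuousOn
        (continuousOn_const.add (continuousOn_primitive_interval' (II.proj' hm i) left_mem_uIcc))
    · exact (II.proj' hm i).continuousOn_mul
        (continuousOn_const.add (continuousOn_primitive_interval' (II.proj' hu i) left_mem_uIcc))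
lemma II.dot_cont {n : ℕ} {f g : ℝ → Fin n → ℝ} {a b : ℝ} (hf : IntervalIntegrable f volume a b)
    (hg : ContinuousOn g (uIcc a b)) :
    IntervalIntegrable (fun t => f t ⬝ᵥ g t) volume a b := by
  have : (fun t => f t ⬝ᵥ g t) = ∑ i : Fin n, (fun t => f t i * g t i) := by
    funext t; simp [dotProduct]
  rw [this]
  refine IntervalIntegrable.sum (f := fun i t => f t i * g t i) Finset.univ (fun i _ => ?_)
  exact (II.proj' hf i).mul_continuousOn ((continuous_apply i).comp_continuousOn hg)
lemma II.cont_dot {n : ℕ} {f g : ℝ → Fin n → ℝ} {a b : ℝ} (hf : ContinuousOn f (uIcc a b))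
    (hg : IntervalIntegrable g volume a b) :
    IntervalIntegrable (fun t => f t ⬝ᵥ g t) volume a b := by
  have : (fun t => f t ⬝ᵥ g t) = fun t => g t ⬝ᵥ f t := by
    funext t; exact dotProduct_comm _ _
  rw [this]; exact II.dot_cont hg hf

lemma contOfRep {n : ℕ} {T : ℝ} (hT : 0 ≤ T) {f u : ℝ → Fin n → ℝ}
    (hu : IntervalIntegrable u volume 0 T)
    (hrep : ∀ t ∈ Icc (0:ℝ) T, f t = f 0 + ∫ s in (0:ℝ)..t, u s) :
    ContinuousOn f (Icc 0 T) := by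
  have hc : ContinuousOn (fun t => f 0 + ∫ s in (0:ℝ)..t, u s) (Icc 0 T) := by
    rw [← uIcc_of_le hT]
    exact continuousOn_const.add (continuousOn_primitive_interval' hu left_mem_uIcc)
  exact hc.congr (fun t ht => hrep t ht)

lemma chain_identity {n : ℕ} {T : ℝ} (hT : 0 ≤ T) :
    ∀ (k : ℕ) (g z : ℕ → ℝ → Fin n → ℝ),
    (∀ j < k, IntervalIntegrable (g (j+1)) volume 0 T) →
    (∀ j < k, ∀ t ∈ Icc (0:ℝ) T, g j t = g j 0 + ∫ s in (0:ℝ)..t, g (j+1) s) →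
    (∀ j < k, IntervalIntegrable (z (j+1)) volume 0 T) →
    (∀ j < k, ∀ t ∈ Icc (0:ℝ) T, z j t = z j 0 + ∫ s in (0:ℝ)..t, z (j+1) s) →
    ∫ t in (0:ℝ)..T, g k t ⬝ᵥ z 0 t
      = (∑ j ∈ Finset.range k,
          (-1:ℝ)^j * (g (k-1-j) T ⬝ᵥ z j T - g (k-1-j) 0 ⬝ᵥ z j 0))
        + (-1:ℝ)^k * ∫ t in (0:ℝ)..T, g 0 t ⬝ᵥ z k t := by
  intro k
  induction k with
  | zero => intro g z _ _ _ _; simp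
  | succ k ih =>
    intro g z hgI hgR hzI hzR
    have hkk : k < k + 1 := Nat.lt_succ_self k
    have h0k : 0 < k + 1 := Nat.succ_pos k
    have hz0c : ContinuousOn (z 0) (Icc 0 T) := contOfRep hT (hzI 0 h0k) (hzR 0 h0k)
    have hgkc : ContinuousOn (g k) (Icc 0 T) := contOfRep hT (hgI k hkk) (hgR k hkk)
    have hz0c' : ContinuousOn (z 0) (uIcc 0 T) := by rwa [uIcc_of_le hT]
    have hgkc' : ContinuousOn (g k) (uIcc 0 T) := by rwa [uIcc_of_le hT]
    have i1 : IntervalIntegrable (fun t => g (k+1) t ⬝ᵥ z 0 t) volume 0 T :=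
      II.dot_cont (hgI k hkk) hz0c'
    have i2 : IntervalIntegrable (fun t => g k t ⬝ᵥ z 1 t) volume 0 T :=
      II.cont_dot hgkc' (hzI 0 h0k)
    have hibp := ibp_vec hT (hgI k hkk) (hzI 0 h0k) (hgR k hkk) (hzR 0 h0k)
    rw [integral_add i1 i2] at hibp
    have ihz := ih g (fun j => z (j+1))
      (fun j hj => hgI j (hj.trans hkk))
      (fun j hj => hgR j (hj.trans hkk))
      (fun j hj => hzI (j+1) (Nat.succ_lt_succ hj))
      (fun j hj => hzR (j+1) (Nat.succ_lt_succ hj))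
    rw [Finset.sum_range_succ']
    have hsum : ∑ j ∈ Finset.range k,
        (-1:ℝ)^(j+1) * (g (k+1-1-(j+1)) T ⬝ᵥ z (j+1) T - g (k+1-1-(j+1)) 0 ⬝ᵥ z (j+1) 0)
        = - ∑ j ∈ Finset.range k,
            (-1:ℝ)^j * (g (k-1-j) T ⬝ᵥ z (j+1) T - g (k-1-j) 0 ⬝ᵥ z (j+1) 0) := by
      rw [← Finset.sum_neg_distrib]
      refine Finset.sum_congr rfl (fun j hj => ?_)
      have hidx : k + 1 - 1 - (j+1) = k - 1 - j := by omega
      rw [hidx, pow_succ]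
      ring
    rw [hsum]
    have hidx0 : k + 1 - 1 - 0 = k := rfl
    rw [hidx0, pow_zero]
    have hpow : (-1:ℝ)^(k+1) = -(-1:ℝ)^k := by rw [pow_succ]; ring
    rw [hpow]
    linarith [hibp, ihz]
noncomputable def chainF {n : ℕ} (k : ℕ) (x v : ℝ → Fin n → ℝ) : ℕ → ℝ → Fin n → ℝ :=
  fun j => if j = k then v else iteratedDeriv j x

lemma chain_props {n k : ℕ} (hk : 1 ≤ k) {T : ℝ} (hT : 0 ≤ T)
    {x v : ℝ → Fin n → ℝ}
    (hdiff : ∀ j < k - 1, Differentiable ℝ (iteratedDeriv j x))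
    (hv : IntervalIntegrable v volume 0 T)
    (hrep : ∀ t ∈ Icc (0:ℝ) T,
      iteratedDeriv (k-1) x t = iteratedDeriv (k-1) x 0 + ∫ s in (0:ℝ)..t, v s) :
    (∀ j < k, ContinuousOn (iteratedDeriv j x) (Icc 0 T)) ∧
    (∀ j < k, IntervalIntegrable (chainF k x v (j+1)) volume 0 T) ∧
    (∀ j < k, ∀ t ∈ Icc (0:ℝ) T,
      chainF k x v j t = chainF k x v j 0 + ∫ s in (0:ℝ)..t, chainF k x v (j+1) s) := by
  have hcont : ∀ j < k, ContinuousOn (iteratedDeriv j x) (Icc 0 T) := by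
    intro j hj
    by_cases h : j < k - 1
    · exact ((hdiff j h).continuous).continuousOn
    · have hje : j = k - 1 := by omega
      subst hje
      exact contOfRep hT hv hrep
  refine ⟨hcont, ?_, ?_⟩
  · intro j hj
    by_cases h : j + 1 = k
    · simp only [chainF, if_pos h]; exact hv
    · have hlt : j + 1 < k := by omega
      simp only [chainF, if_neg h]
      have := hcont (j+1) hlt
      rw [← uIcc_of_le hT] at this
      exact this.intervalIntegrable
  · intro j hj t ht
    have hjne : j ≠ k := by omega
    by_cases h : j + 1 = k
    · simp only [chainF, if_neg hjne, if_pos h]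
      have hje : j = k - 1 := by omega
      subst hje
      exact hrep t ht
    · have hlt : j + 1 < k := by omega
      have hjlt : j < k - 1 := by omega
      simp only [chainF, if_neg hjne, if_neg h]
      have hder : ∀ s ∈ uIcc (0:ℝ) t, HasDerivAt (iteratedDeriv j x)
          (iteratedDeriv (j+1) x s) s := by
        intro s _
        rw [iteratedDeriv_succ]
        exact ((hdiff j hjlt) s).hasDerivAt
      have hint : IntervalIntegrable (iteratedDeriv (j+1) x) volume 0 t := by
        refine IImonoE hT ?_ ht
        have := hcont (j+1) hlt
        rw [← uIcc_of_le hT] at this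
        exact this.intervalIntegrable
      have := intervalIntegral.integral_eq_sub_of_hasDerivAt hder hint
      rw [this]; abel
/-- Theorem 3.1: sufficient optimality condition for the `k`-th order differential
inclusion problem (PHC). -/
theorem sufficient_optimality_kth_order
    (n k : ℕ) (hn : 1 ≤ n) (hk : 1 ≤ k) (T : ℝ) (hT : 0 < T)
    (F : (Fin n → ℝ) → ℝ → Set (Fin n → ℝ))
    (S : Set ((Fin n → ℝ) × (Fin n → ℝ)))
    (X : ℝ → Set (Fin n → ℝ))
    (f : (Fin n → ℝ) → (Fin n → ℝ) → ℝ)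
    (hF : ∀ t ∈ Icc (0:ℝ) T, Convex ℝ {p : (Fin n → ℝ) × (Fin n → ℝ) | p.2 ∈ F p.1 t})
    (hf : ConvexOn ℝ univ (fun p : (Fin n → ℝ) × (Fin n → ℝ) => f p.1 p.2))
    (hS : Convex ℝ S)
    (hX : ∀ t ∈ Icc (0:ℝ) T, Convex ℝ (X t))
    (xt vt : ℝ → (Fin n → ℝ))
    (hfeas : IsFeasible n k T F S X xt vt)
    (xs w : ℝ → (Fin n → ℝ))
    (hadj : IsAdjointArc n k T xs w)
    (vs : ℝ → (Fin n → ℝ))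
    -- conditions (a)-(b)
    (hab : ∀ᵐ t ∂volume, t ∈ Icc (0:ℝ) T →
      (∀ y ∈ X t, 0 ≤ (y - xt t) ⬝ᵥ vs t) ∧
      (∀ ξ η, η ∈ F ξ t →
        (η - vt t) ⬝ᵥ xs t ≤ (((-1:ℝ)^k • w t - vs t) ⬝ᵥ (ξ - xt t))))
    -- condition (c): transversality at the endpoints via a subgradient and a dual-cone element
    (hc : ∃ p₀ p₁ μ₀ μ₁ : Fin n → ℝ,
      (∀ y₀ y₁, f (xt 0) (xt T) + (p₀ ⬝ᵥ (y₀ - xt 0) + p₁ ⬝ᵥ (y₁ - xt T)) ≤ f y₀ y₁) ∧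
      (∀ s ∈ S, 0 ≤ (s.1 - xt 0) ⬝ᵥ μ₀ + (s.2 - xt T) ⬝ᵥ μ₁) ∧
      (-1:ℝ)^(k-1) • iteratedDeriv (k-1) xs 0 = p₀ - μ₀ ∧
      (-1:ℝ)^k • iteratedDeriv (k-1) xs T = p₁ - μ₁)
    -- condition (d)
    (hd : ∀ j < k - 1, ∀ s ∈ S,
      0 ≤ (s.1 - iteratedDeriv (k-j-1) xt 0) ⬝ᵥ ((-1:ℝ)^(j+1) • iteratedDeriv j xs 0)
        + (s.2 - iteratedDeriv (k-j-1) xt T) ⬝ᵥ ((-1:ℝ)^j • iteratedDeriv j xs T)) :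
    ∀ x v, IsFeasible n k T F S X x v → f (xt 0) (xt T) ≤ f (x 0) (x T) := by
  intro x v hx
  obtain ⟨hxd, hxv, hxrep, hxF, hxS, hxX⟩ := hx
  obtain ⟨htd, htv, htrep, _, _, _⟩ := hfeas
  obtain ⟨had, haw, harep⟩ := hadj
  have hT0 : (0:ℝ) ≤ T := hT.le
  have hk0 : 0 < k := hk
  obtain ⟨hxc, hxI, hxR⟩ := chain_props hk hT0 hxd hxv hxrep
  obtain ⟨htc, htI, htR⟩ := chain_props hk hT0 htd htv htrep
  obtain ⟨hzc, hzI, hzR⟩ := chain_props hk hT0 had haw harep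
  -- continuity of x, xt, xs on [0,T] (as uIcc)
  have hx0c : ContinuousOn x (uIcc 0 T) := by
    have := hxc 0 hk0; rw [iteratedDeriv_zero] at this; rwa [uIcc_of_le hT0]
  have hxt0c : ContinuousOn xt (uIcc 0 T) := by
    have := htc 0 hk0; rw [iteratedDeriv_zero] at this; rwa [uIcc_of_le hT0]
  have hxs0c : ContinuousOn xs (uIcc 0 T) := by
    have := hzc 0 hk0; rw [iteratedDeriv_zero] at this; rwa [uIcc_of_le hT0]
  -- chain identities
  have idx := chain_identity hT0 k (chainF k x v) (chainF k xs w) hxI hxR hzI hzR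
  have idt := chain_identity hT0 k (chainF k xt vt) (chainF k xs w) htI htR hzI hzR
  have exk : chainF k x v k = v := if_pos rfl
  have etk : chainF k xt vt k = vt := if_pos rfl
  have ezk : chainF k xs w k = w := if_pos rfl
  have h0k : (0:ℕ) ≠ k := by omega
  have ex0 : chainF k x v 0 = x := by
    show (if 0 = k then v else iteratedDeriv 0 x) = x
    rw [if_neg h0k, iteratedDeriv_zero]
  have et0 : chainF k xt vt 0 = xt := by
    show (if 0 = k then vt else iteratedDeriv 0 xt) = xt
    rw [if_neg h0k, iteratedDeriv_zero]
  have ez0 : chainF k xs w 0 = xs := by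
    show (if 0 = k then w else iteratedDeriv 0 xs) = xs
    rw [if_neg h0k, iteratedDeriv_zero]
  rw [exk, ex0, ez0, ezk] at idx
  rw [etk, et0, ez0, ezk] at idt
  -- integrated inequality from (a)-(b)
  have iVxs : IntervalIntegrable (fun t => v t ⬝ᵥ xs t) volume 0 T := II.dot_cont hxv hxs0c
  have iVtxs : IntervalIntegrable (fun t => vt t ⬝ᵥ xs t) volume 0 T := II.dot_cont htv hxs0c
  have iXw : IntervalIntegrable (fun t => x t ⬝ᵥ w t) volume 0 T := II.cont_dot hx0c haw
  have iXtw : IntervalIntegrable (fun t => xt t ⬝ᵥ w t) volume 0 T := II.cont_dot hxt0c haw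
  have haeIneq : ∀ᵐ t ∂(volume.restrict (Icc (0:ℝ) T)),
      (fun t => v t ⬝ᵥ xs t - vt t ⬝ᵥ xs t) t
        ≤ (fun t => (-1:ℝ)^k * (x t ⬝ᵥ w t) - (-1:ℝ)^k * (xt t ⬝ᵥ w t)) t := by
    rw [ae_restrict_iff' measurableSet_Icc]
    filter_upwards [hab, hxF] with t h1 h2 ht
    obtain ⟨ha, hb⟩ := h1 ht
    have h3 := hb (x t) (v t) (h2 ht)
    have h4 := ha (x t) (hxX t ht)
    have h5 : ((-1:ℝ)^k • w t - vs t) ⬝ᵥ (x t - xt t)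
        = (-1:ℝ)^k * (w t ⬝ᵥ (x t - xt t)) - vs t ⬝ᵥ (x t - xt t) := by
      rw [sub_dotProduct, smul_dotProduct]; rfl
    have h6 : vs t ⬝ᵥ (x t - xt t) = (x t - xt t) ⬝ᵥ vs t := dotProduct_comm _ _
    have h7 : w t ⬝ᵥ (x t - xt t) = x t ⬝ᵥ w t - xt t ⬝ᵥ w t := by
      rw [dotProduct_comm, sub_dotProduct]
    have h8 : (v t - vt t) ⬝ᵥ xs t = v t ⬝ᵥ xs t - vt t ⬝ᵥ xs t := sub_dotProduct _ _ _
    rw [h5, h6, h7, h8] at h3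
    show v t ⬝ᵥ xs t - vt t ⬝ᵥ xs t ≤ (-1:ℝ)^k * (x t ⬝ᵥ w t) - (-1:ℝ)^k * (xt t ⬝ᵥ w t)
    linarith
  have hmono := intervalIntegral.integral_mono_ae_restrict hT0
    (iVxs.sub iVtxs) (((iXw.const_mul _)).sub ((iXtw.const_mul _))) haeIneq
  rw [intervalIntegral.integral_sub iVxs iVtxs,
    intervalIntegral.integral_sub (iXw.const_mul _) (iXtw.const_mul _),
    intervalIntegral.integral_const_mul, intervalIntegral.integral_const_mul] at hmono
  -- the boundary sum is ≤ 0
  have key : ∑ j ∈ Finset.range k, (-1:ℝ)^j *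
      ((iteratedDeriv (k-1-j) x T - iteratedDeriv (k-1-j) xt T) ⬝ᵥ iteratedDeriv j xs T
        - (iteratedDeriv (k-1-j) x 0 - iteratedDeriv (k-1-j) xt 0) ⬝ᵥ iteratedDeriv j xs 0)
      ≤ 0 := by
    have hC : ∑ j ∈ Finset.range k, (-1:ℝ)^j *
        ((iteratedDeriv (k-1-j) x T - iteratedDeriv (k-1-j) xt T) ⬝ᵥ iteratedDeriv j xs T
          - (iteratedDeriv (k-1-j) x 0 - iteratedDeriv (k-1-j) xt 0) ⬝ᵥ iteratedDeriv j xs 0)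
        = (∑ j ∈ Finset.range k, (-1:ℝ)^j *
            (chainF k x v (k-1-j) T ⬝ᵥ chainF k xs w j T
              - chainF k x v (k-1-j) 0 ⬝ᵥ chainF k xs w j 0))
          - ∑ j ∈ Finset.range k, (-1:ℝ)^j *
            (chainF k xt vt (k-1-j) T ⬝ᵥ chainF k xs w j T
              - chainF k xt vt (k-1-j) 0 ⬝ᵥ chainF k xs w j 0) := by
      rw [← Finset.sum_sub_distrib]
      refine Finset.sum_congr rfl (fun j hj => ?_)
      have hj' : j < k := Finset.mem_range.mp hj
      have e1 : chainF k x v (k-1-j) = iteratedDeriv (k-1-j) x := if_neg (by omega)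
      have e2 : chainF k xt vt (k-1-j) = iteratedDeriv (k-1-j) xt := if_neg (by omega)
      have e3 : chainF k xs w j = iteratedDeriv j xs := if_neg (by omega)
      rw [e1, e2, e3, sub_dotProduct, sub_dotProduct]
      ring
    rw [hC]
    linarith [idx, idt, hmono]
  -- split off the top term
  have hsplit := Finset.sum_range_succ (fun j => (-1:ℝ)^j *
      ((iteratedDeriv (k-1-j) x T - iteratedDeriv (k-1-j) xt T) ⬝ᵥ iteratedDeriv j xs T
        - (iteratedDeriv (k-1-j) x 0 - iteratedDeriv (k-1-j) xt 0) ⬝ᵥ iteratedDeriv j xs 0))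
    (k-1)
  have hk1 : k - 1 + 1 = k := by omega
  rw [hk1] at hsplit
  have hlow : 0 ≤ ∑ j ∈ Finset.range (k-1), (-1:ℝ)^j *
      ((iteratedDeriv (k-1-j) x T - iteratedDeriv (k-1-j) xt T) ⬝ᵥ iteratedDeriv j xs T
        - (iteratedDeriv (k-1-j) x 0 - iteratedDeriv (k-1-j) xt 0) ⬝ᵥ iteratedDeriv j xs 0) := by
    refine Finset.sum_nonneg (fun j hj => ?_)
    have hj' : j < k - 1 := Finset.mem_range.mp hj
    have hhd := hd j hj' (iteratedDeriv (k-j-1) x 0, iteratedDeriv (k-j-1) x T)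
      (hxS (k-j-1) (by omega))
    have hidx : k - j - 1 = k - 1 - j := by omega
    rw [hidx] at hhd
    simp only [dotProduct_smul, smul_eq_mul, pow_succ] at hhd
    nlinarith [hhd]
  have htop : (-1:ℝ)^(k-1) *
      ((iteratedDeriv (k-1-(k-1)) x T - iteratedDeriv (k-1-(k-1)) xt T) ⬝ᵥ iteratedDeriv (k-1) xs T
        - (iteratedDeriv (k-1-(k-1)) x 0 - iteratedDeriv (k-1-(k-1)) xt 0) ⬝ᵥ iteratedDeriv (k-1) xs 0)
      ≤ 0 := by
    have := key
    rw [hsplit] at this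
    linarith
  have hzz : k - 1 - (k-1) = 0 := by omega
  simp only [hzz, iteratedDeriv_zero] at htop
  -- endpoint argument
  obtain ⟨p₀, p₁, μ₀, μ₁, hsub, hdual, hc0, hc1⟩ := hc
  have hS0 : (x 0, x T) ∈ S := by
    have := hxS 0 hk0
    rwa [iteratedDeriv_zero] at this
  have hdS := hdual (x 0, x T) hS0
  have hp0 : p₀ = (-1:ℝ)^(k-1) • iteratedDeriv (k-1) xs 0 + μ₀ := by rw [hc0]; abel
  have hp1 : p₁ = (-1:ℝ)^k • iteratedDeriv (k-1) xs T + μ₁ := by rw [hc1]; abel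
  have hq0 : p₀ ⬝ᵥ (x 0 - xt 0)
      = (-1:ℝ)^(k-1) * ((x 0 - xt 0) ⬝ᵥ iteratedDeriv (k-1) xs 0)
        + (x 0 - xt 0) ⬝ᵥ μ₀ := by
    rw [dotProduct_comm, hp0, dotProduct_add, dotProduct_smul, smul_eq_mul]
  have hq1 : p₁ ⬝ᵥ (x T - xt T)
      = (-1:ℝ)^k * ((x T - xt T) ⬝ᵥ iteratedDeriv (k-1) xs T)
        + (x T - xt T) ⬝ᵥ μ₁ := by
    rw [dotProduct_comm, hp1, dotProduct_add, dotProduct_smul, smul_eq_mul]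
  have hpw : (-1:ℝ)^k = -(-1:ℝ)^(k-1) := by
    conv_lhs => rw [← hk1]
    rw [pow_succ]; ring
  have hfin := hsub (x 0) (x T)
  rw [hq0, hq1, hpw] at hfin
  nlinarith [hfin, hdS, htop]
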